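/- Let T > 0 and let u : [0,T] × [0,1] → ℝ be a C² function satisfying the one-dimensional wave equation ∂ₜ²u = ∂ₓ²u on [0,T] × [0,1] together with the Dirichlet boundary conditions u(t,0) = u(t,1) = 0 for all t ∈ [0,T]. Then ∫₀ᵀ (∂ₓu(t,1))² dt ≥ (T − 2)·∫₀¹ [(∂ₜu)² + (∂ₓu)²](0,x) dx. -/

import Mathlib

open Real Set MeasureTheory

noncomputable def Vd (u : ℝ → ℝ → ℝ) : ℝ × ℝ → (ℝ × ℝ) →L[ℝ] ℝ :=
  fderiv ℝ (fun p : ℝ × ℝ => u p.1 p.2)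
noncomputable def Wd (u : ℝ → ℝ → ℝ) : ℝ × ℝ → (ℝ × ℝ) →L[ℝ] ((ℝ × ℝ) →L[ℝ] ℝ) :=
  fderiv ℝ (Vd u)

/-- energy density -/
noncomputable def eF (u : ℝ → ℝ → ℝ) (t x : ℝ) : ℝ :=
  (Vd u (t,x) (1,0))^2 + (Vd u (t,x) (0,1))^2
/-- time derivative of the energy density -/
noncomputable def gF (u : ℝ → ℝ → ℝ) (s x : ℝ) : ℝ :=
  2*Vd u (s,x) (1,0)*Wd u (s,x) (1,0) (1,0) + 2*Vd u (s,x) (0,1)*Wd u (s,x) (1,0) (0,1)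
/-- multiplier density -/
noncomputable def qF (u : ℝ → ℝ → ℝ) (t x : ℝ) : ℝ :=
  2*x*Vd u (t,x) (0,1)*Vd u (t,x) (1,0)
/-- time derivative of the multiplier density -/
noncomputable def kF (u : ℝ → ℝ → ℝ) (s x : ℝ) : ℝ :=
  2*x*(Wd u (s,x) (1,0) (0,1)*Vd u (s,x) (1,0) + Vd u (s,x) (0,1)*Wd u (s,x) (1,0) (1,0))

variable {u : ℝ → ℝ → ℝ}

lemma contDiff_Vd (hu : ContDiff ℝ 2 (fun p : ℝ × ℝ => u p.1 p.2)) : ContDiff ℝ 1 (Vd u) :=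
  hu.fderiv_right (by norm_num)

lemma hasD_t (hu : ContDiff ℝ 2 (fun p : ℝ × ℝ => u p.1 p.2)) (t x : ℝ) :
    HasDerivAt (fun s => u s x) (Vd u (t, x) (1, 0)) t := by
  have hc : HasDerivAt (fun s : ℝ => ((s, x) : ℝ × ℝ)) (1, 0) t :=
    (hasDerivAt_id t).prodMk (hasDerivAt_const t x)
  exact ((hu.differentiable (by norm_num)).differentiableAt.hasFDerivAt).comp_hasDerivAt t hc

lemma hasD_x (hu : ContDiff ℝ 2 (fun p : ℝ × ℝ => u p.1 p.2)) (t x : ℝ) :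
    HasDerivAt (fun z => u t z) (Vd u (t, x) (0, 1)) x := by
  have hc : HasDerivAt (fun z : ℝ => ((t, z) : ℝ × ℝ)) (0, 1) x :=
    (hasDerivAt_const x t).prodMk (hasDerivAt_id x)
  exact ((hu.differentiable (by norm_num)).differentiableAt.hasFDerivAt).comp_hasDerivAt x hc

lemma hasD_Vt (hu : ContDiff ℝ 2 (fun p : ℝ × ℝ => u p.1 p.2)) (t x : ℝ) (w : ℝ × ℝ) :
    HasDerivAt (fun s => Vd u (s, x) w) (Wd u (t, x) (1, 0) w) t := by
  have hc : HasDerivAt (fun s : ℝ => ((s, x) : ℝ × ℝ)) (1, 0) t :=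
    (hasDerivAt_id t).prodMk (hasDerivAt_const t x)
  have h2 : HasDerivAt (fun s => Vd u (s, x)) (Wd u (t, x) (1, 0)) t :=
    (((contDiff_Vd hu).differentiable one_ne_zero).differentiableAt.hasFDerivAt).comp_hasDerivAt t hc
  simpa using h2.clm_apply (hasDerivAt_const t w)

lemma hasD_Vx (hu : ContDiff ℝ 2 (fun p : ℝ × ℝ => u p.1 p.2)) (t x : ℝ) (w : ℝ × ℝ) :
    HasDerivAt (fun z => Vd u (t, z) w) (Wd u (t, x) (0, 1) w) x := by
  have hc : HasDerivAt (fun z : ℝ => ((t, z) : ℝ × ℝ)) (0, 1) x :=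
    (hasDerivAt_const x t).prodMk (hasDerivAt_id x)
  have h2 : HasDerivAt (fun z => Vd u (t, z)) (Wd u (t, x) (0, 1)) x :=
    (((contDiff_Vd hu).differentiable one_ne_zero).differentiableAt.hasFDerivAt).comp_hasDerivAt x hc
  simpa using h2.clm_apply (hasDerivAt_const x w)

lemma symmW (hu : ContDiff ℝ 2 (fun p : ℝ × ℝ => u p.1 p.2)) (p : ℝ × ℝ) (v w : ℝ × ℝ) :
    Wd u p v w = Wd u p w v :=
  second_derivative_symmetric
    (fun y => (hu.differentiable (by norm_num)).differentiableAt.hasFDerivAt)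
    (((contDiff_Vd hu).differentiable one_ne_zero).differentiableAt.hasFDerivAt) v w

lemma my_swap {f : ℝ → ℝ → ℝ} (hf : Continuous fun p : ℝ × ℝ => f p.1 p.2)
    {a b c d : ℝ} (hab : a ≤ b) (hcd : c ≤ d) :
    (∫ x in a..b, ∫ s in c..d, f x s) = ∫ s in c..d, ∫ x in a..b, f x s := by
  rw [intervalIntegral.integral_of_le hab, intervalIntegral.integral_of_le hcd]
  simp_rw [intervalIntegral.integral_of_le hcd, intervalIntegral.integral_of_le hab]
  apply MeasureTheory.integral_integral_swap
  rw [Measure.prod_restrict]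
  have h1 : IntegrableOn (fun p : ℝ × ℝ => f p.1 p.2) (Icc a b ×ˢ Icc c d)
      (volume.prod volume) := by
    rw [← MeasureTheory.Measure.volume_eq_prod ℝ ℝ]
    exact hf.continuousOn.integrableOn_compact (isCompact_Icc.prod isCompact_Icc)
  exact h1.mono_set (prod_mono Ioc_subset_Icc_self Ioc_subset_Icc_self)

lemma bdry_deriv {T : ℝ} (hT : 0 < T) {g : ℝ → ℝ} {d : ℝ} {s : ℝ} (hs : s ∈ Icc (0:ℝ) T)
    (hg : HasDerivAt g d s) (h0 : ∀ t ∈ Icc (0:ℝ) T, g t = 0) : d = 0 := by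
  have h1 : HasDerivWithinAt g 0 (Icc 0 T) s :=
    (hasDerivWithinAt_const s (Icc 0 T) 0).congr (fun y hy => h0 y hy) (h0 s hs)
  have h2 := hg.hasDerivWithinAt (s := Icc (0:ℝ) T)
  have hud := (uniqueDiffOn_Icc hT) s hs
  rw [← h1.derivWithin hud, ← h2.derivWithin hud]

/-- boundary observability inequality for the 1D wave equation with
Dirichlet boundary conditions on `[0,T] × [0,1]`. -/
theorem wave_boundary_observability
    (T : ℝ) (hT : 0 < T) (u : ℝ → ℝ → ℝ)
    (hu : ContDiff ℝ 2 (fun p : ℝ × ℝ => u p.1 p.2))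
    (hwave : ∀ t ∈ Icc (0:ℝ) T, ∀ x ∈ Icc (0:ℝ) 1,
      deriv (fun s => deriv (fun s' => u s' x) s) t
        = deriv (fun z => deriv (fun z' => u t z') z) x)
    (hbc0 : ∀ t ∈ Icc (0:ℝ) T, u t 0 = 0)
    (hbc1 : ∀ t ∈ Icc (0:ℝ) T, u t 1 = 0) :
    (∫ t in (0:ℝ)..T, (deriv (fun z => u t z) 1) ^ 2)
      ≥ (T - 2) * ∫ x in (0:ℝ)..1,
          ((deriv (fun s => u s x) 0) ^ 2 + (deriv (fun z => u 0 z) x) ^ 2) := by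
  -- continuity facts
  have hVd1 : ContDiff ℝ 1 (Vd u) := contDiff_Vd hu
  have hVc : Continuous (Vd u) := hVd1.continuous
  have hWc : Continuous (Wd u) := hVd1.continuous_fderiv one_ne_zero
  have cV : ∀ w : ℝ × ℝ, Continuous fun p : ℝ × ℝ => Vd u p w :=
    fun w => hVc.clm_apply continuous_const
  have cW : ∀ v w : ℝ × ℝ, Continuous fun p : ℝ × ℝ => Wd u p v w :=
    fun v w => (hWc.clm_apply continuous_const).clm_apply continuous_const
  have ceF : Continuous fun p : ℝ × ℝ => eF u p.1 p.2 := by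
    simp only [eF]; exact ((cV (1,0)).pow 2).add ((cV (0,1)).pow 2)
  have cgF : Continuous fun p : ℝ × ℝ => gF u p.1 p.2 := by
    simp only [gF]
    exact ((continuous_const.mul (cV (1,0))).mul (cW (1,0) (1,0))).add
      ((continuous_const.mul (cV (0,1))).mul (cW (1,0) (0,1)))
  have cqF : Continuous fun p : ℝ × ℝ => qF u p.1 p.2 := by
    simp only [qF]
    exact ((continuous_const.mul continuous_snd).mul (cV (0,1))).mul (cV (1,0))
  have ckF : Continuous fun p : ℝ × ℝ => kF u p.1 p.2 := by
    simp only [kF]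
    exact (continuous_const.mul continuous_snd).mul
      (((cW (1,0) (0,1)).mul (cV (1,0))).add ((cV (0,1)).mul (cW (1,0) (1,0))))
  have sliceT : ∀ {f : ℝ × ℝ → ℝ}, Continuous f → ∀ (x a b : ℝ),
      IntervalIntegrable (fun s => f (s, x)) volume a b :=
    fun hf x a b => (hf.comp (continuous_id.prodMk continuous_const)).intervalIntegrable a b
  have sliceX : ∀ {f : ℝ × ℝ → ℝ}, Continuous f → ∀ (t a b : ℝ),
      IntervalIntegrable (fun x => f (t, x)) volume a b :=
    fun hf t a b => (hf.comp (continuous_const.prodMk continuous_id)).intervalIntegrable a b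
  -- boundary derivative facts
  have hbt0 : ∀ s ∈ Icc (0:ℝ) T, Vd u (s,0) (1,0) = 0 :=
    fun s hs => bdry_deriv hT hs (hasD_t hu s 0) hbc0
  have hbt1 : ∀ s ∈ Icc (0:ℝ) T, Vd u (s,1) (1,0) = 0 :=
    fun s hs => bdry_deriv hT hs (hasD_t hu s 1) hbc1
  -- wave equation in second-derivative form
  have hwaveW : ∀ t ∈ Icc (0:ℝ) T, ∀ x ∈ Icc (0:ℝ) 1,
      Wd u (t,x) (1,0) (1,0) = Wd u (t,x) (0,1) (0,1) := by
    intro t ht x hx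
    have h := hwave t ht x hx
    have e1 : (fun s => deriv (fun s' => u s' x) s) = fun s => Vd u (s,x) (1,0) :=
      funext fun s => (hasD_t hu s x).deriv
    have e2 : (fun z => deriv (fun z' => u t z') z) = fun z => Vd u (t,z) (0,1) :=
      funext fun z => (hasD_x hu t z).deriv
    rw [e1, e2, (hasD_Vt hu t x (1,0)).deriv, (hasD_Vx hu t x (0,1)).deriv] at h
    exact h
  -- FTC in time for the energy density
  have ftcT_e : ∀ (t x : ℝ), eF u t x - eF u 0 x = ∫ s in (0:ℝ)..t, gF u s x := by
    intro t x
    have hint : IntervalIntegrable (fun s => gF u s x) volume 0 t := sliceT cgF x 0 t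
    have hd : ∀ s ∈ uIcc (0:ℝ) t, HasDerivAt (fun s => eF u s x) (gF u s x) s := by
      intro s _
      simp only [eF]
      have h := ((hasD_Vt hu s x (1,0)).pow 2).add ((hasD_Vt hu s x (0,1)).pow 2)
      refine h.congr_deriv ?_
      simp only [gF, pow_one]
      push_cast
      ring
    exact (intervalIntegral.integral_eq_sub_of_hasDerivAt hd hint).symm
  -- spatial integral of gF vanishes
  have intg : ∀ s ∈ Icc (0:ℝ) T, (∫ x in (0:ℝ)..1, gF u s x) = 0 := by
    intro s hs
    have hd : ∀ z ∈ uIcc (0:ℝ) 1,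
        HasDerivAt (fun z => 2 * Vd u (s,z) (1,0) * Vd u (s,z) (0,1)) (gF u s z) z := by
      intro z hz
      rw [uIcc_of_le zero_le_one] at hz
      have h := ((hasD_Vx hu s z (1,0)).const_mul 2).mul (hasD_Vx hu s z (0,1))
      refine h.congr_deriv ?_
      simp only [gF]
      rw [symmW hu (s,z) (1,0) (0,1), hwaveW s hs z hz]
      ring
    have h := intervalIntegral.integral_eq_sub_of_hasDerivAt hd (sliceX cgF s 0 1)
    rw [h, hbt1 s hs, hbt0 s hs]
    ring
  -- energy conservation
  have hE : ∀ t ∈ Icc (0:ℝ) T,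
      (∫ x in (0:ℝ)..1, eF u t x) = ∫ x in (0:ℝ)..1, eF u 0 x := by
    intro t ht
    have h1 : (∫ x in (0:ℝ)..1, eF u t x) - (∫ x in (0:ℝ)..1, eF u 0 x)
        = ∫ x in (0:ℝ)..1, (eF u t x - eF u 0 x) :=
      (intervalIntegral.integral_sub (sliceX ceF t 0 1) (sliceX ceF 0 0 1)).symm
    have h2 : (∫ x in (0:ℝ)..1, (eF u t x - eF u 0 x))
        = ∫ x in (0:ℝ)..1, ∫ s in (0:ℝ)..t, gF u s x := by
      simp only [ftcT_e t]
    have h3 := my_swap (f := fun x s => gF u s x) (cgF.comp continuous_swap)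
      zero_le_one ht.1
    have h4 : (∫ s in (0:ℝ)..t, ∫ x in (0:ℝ)..1, gF u s x) = 0 := by
      have heq : EqOn (fun s => ∫ x in (0:ℝ)..1, gF u s x) (fun _ => (0:ℝ)) (uIcc 0 t) := by
        intro s hs
        rw [uIcc_of_le ht.1] at hs
        exact intg s ⟨hs.1, hs.2.trans ht.2⟩
      rw [intervalIntegral.integral_congr heq]
      simp
    linarith
  -- spatial integral of kF
  have hK : ∀ s ∈ Icc (0:ℝ) T, (∫ x in (0:ℝ)..1, kF u s x)
      = (Vd u (s,1) (0,1))^2 - ∫ x in (0:ℝ)..1, eF u 0 x := by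
    intro s hs
    have hd : ∀ z ∈ uIcc (0:ℝ) 1,
        HasDerivAt (fun z => z * eF u s z) (eF u s z + kF u s z) z := by
      intro z hz
      rw [uIcc_of_le zero_le_one] at hz
      simp only [eF, kF]
      have h := (hasDerivAt_id z).mul
        (((hasD_Vx hu s z (1,0)).pow 2).add ((hasD_Vx hu s z (0,1)).pow 2))
      refine h.congr_deriv ?_
      rw [symmW hu (s,z) (1,0) (0,1), hwaveW s hs z hz]
      push_cast
      simp only [id_eq, Pi.add_apply, Pi.pow_apply]
      ring
    have h2 := intervalIntegral.integral_eq_sub_of_hasDerivAt hd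
      ((sliceX ceF s 0 1).add (sliceX ckF s 0 1))
    rw [intervalIntegral.integral_add (sliceX ceF s 0 1) (sliceX ckF s 0 1)] at h2
    have he1 : eF u s 1 = (Vd u (s,1) (0,1))^2 := by
      simp [eF, hbt1 s hs]
    rw [he1] at h2
    have hEs := hE s hs
    linarith
  -- FTC in time for the multiplier density
  have ftcT_q : ∀ x : ℝ, qF u T x - qF u 0 x = ∫ s in (0:ℝ)..T, kF u s x := by
    intro x
    have hint : IntervalIntegrable (fun s => kF u s x) volume 0 T := sliceT ckF x 0 T
    have hd : ∀ s ∈ uIcc (0:ℝ) T, HasDerivAt (fun s => qF u s x) (kF u s x) s := by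
      intro s _
      simp only [qF]
      have h := ((hasD_Vt hu s x (0,1)).const_mul (2*x)).mul (hasD_Vt hu s x (1,0))
      refine h.congr_deriv ?_
      simp only [kF]
      ring
    exact (intervalIntegral.integral_eq_sub_of_hasDerivAt hd hint).symm
  -- the multiplier identity
  have hq : (∫ x in (0:ℝ)..1, qF u T x) - (∫ x in (0:ℝ)..1, qF u 0 x)
      = (∫ t in (0:ℝ)..T, (Vd u (t,1) (0,1))^2) - T * ∫ x in (0:ℝ)..1, eF u 0 x := by
    have h1 : (∫ x in (0:ℝ)..1, qF u T x) - (∫ x in (0:ℝ)..1, qF u 0 x)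
        = ∫ x in (0:ℝ)..1, (qF u T x - qF u 0 x) :=
      (intervalIntegral.integral_sub (sliceX cqF T 0 1) (sliceX cqF 0 0 1)).symm
    have h2 : (∫ x in (0:ℝ)..1, (qF u T x - qF u 0 x))
        = ∫ x in (0:ℝ)..1, ∫ s in (0:ℝ)..T, kF u s x := by
      simp only [ftcT_q]
    have h3 := my_swap (f := fun x s => kF u s x) (ckF.comp continuous_swap)
      zero_le_one hT.le
    have h4 : (∫ s in (0:ℝ)..T, ∫ x in (0:ℝ)..1, kF u s x)
        = ∫ s in (0:ℝ)..T, ((Vd u (s,1) (0,1))^2 - ∫ x in (0:ℝ)..1, eF u 0 x) := by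
      apply intervalIntegral.integral_congr
      intro s hs
      rw [uIcc_of_le hT.le] at hs
      exact hK s hs
    have h5 : (∫ s in (0:ℝ)..T, ((Vd u (s,1) (0,1))^2 - ∫ x in (0:ℝ)..1, eF u 0 x))
        = (∫ t in (0:ℝ)..T, (Vd u (t,1) (0,1))^2) - T * ∫ x in (0:ℝ)..1, eF u 0 x := by
      have hi1 : IntervalIntegrable (fun s : ℝ => (Vd u (s,1) (0,1))^2) volume 0 T :=
        (((cV (0,1)).comp (continuous_id.prodMk continuous_const)).pow 2).intervalIntegrable 0 T
      rw [intervalIntegral.integral_sub hi1 intervalIntegrable_const]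
      rw [intervalIntegral.integral_const]
      simp [smul_eq_mul]
    linarith
  -- bound on the multiplier functional
  have hE0 : (0:ℝ) ≤ ∫ x in (0:ℝ)..1, eF u 0 x := by
    apply intervalIntegral.integral_nonneg zero_le_one
    intro x _
    simp only [eF]
    positivity
  have hFb : ∀ t ∈ Icc (0:ℝ) T,
      |∫ x in (0:ℝ)..1, qF u t x| ≤ ∫ x in (0:ℝ)..1, eF u 0 x := by
    intro t ht
    have h1 : |∫ x in (0:ℝ)..1, qF u t x| ≤ ∫ x in (0:ℝ)..1, |qF u t x| :=
      intervalIntegral.abs_integral_le_integral_abs zero_le_one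
    have h2 : (∫ x in (0:ℝ)..1, |qF u t x|) ≤ ∫ x in (0:ℝ)..1, eF u t x := by
      apply intervalIntegral.integral_mono_on zero_le_one ((sliceX cqF t 0 1).abs)
        (sliceX ceF t 0 1)
      intro x hx
      simp only [qF, eF]
      set a := Vd u (t,x) (0,1)
      set b := Vd u (t,x) (1,0)
      rw [abs_le]
      constructor <;>
        nlinarith [mul_nonneg hx.1 (sq_nonneg (a - b)), mul_nonneg hx.1 (sq_nonneg (a + b)),
          mul_nonneg (sub_nonneg.2 hx.2) (add_nonneg (sq_nonneg a) (sq_nonneg b))]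
    calc |∫ x in (0:ℝ)..1, qF u t x| ≤ ∫ x in (0:ℝ)..1, eF u t x := h1.trans h2
      _ = ∫ x in (0:ℝ)..1, eF u 0 x := hE t ht
  -- rewrite the goal
  have goalL : (∫ t in (0:ℝ)..T, (deriv (fun z => u t z) 1) ^ 2)
      = ∫ t in (0:ℝ)..T, (Vd u (t,1) (0,1))^2 := by
    have h : ∀ t : ℝ, deriv (fun z => u t z) 1 = Vd u (t,1) (0,1) :=
      fun t => (hasD_x hu t 1).deriv
    simp only [h]
  have goalR : (∫ x in (0:ℝ)..1,
        ((deriv (fun s => u s x) 0) ^ 2 + (deriv (fun z => u 0 z) x) ^ 2))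
      = ∫ x in (0:ℝ)..1, eF u 0 x := by
    have h1 : ∀ x : ℝ, deriv (fun s => u s x) 0 = Vd u (0,x) (1,0) :=
      fun x => (hasD_t hu 0 x).deriv
    have h2 : ∀ x : ℝ, deriv (fun z => u 0 z) x = Vd u (0,x) (0,1) :=
      fun x => (hasD_x hu 0 x).deriv
    simp only [h1, h2, eF]
  rw [ge_iff_le, goalL, goalR]
  have hFT := abs_le.1 (hFb T ⟨hT.le, le_refl T⟩)
  have hF0 := abs_le.1 (hFb 0 ⟨le_refl 0, hT.le⟩)
  linarith [hq, hFT.1, hFT.2, hF0.1, hF0.2, hE0]
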